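/- Let $K$ be a field and $S = K[x,y,z]$ with the strongly stable ideal $I' = (x^2, xy, y^3, xz^2, y^2z^2, yz^3, z^4)$. Then $z$ is not a strong Lefschetz element on $S/I'$: the multiplication map $(S/I')_1 \to (S/I')_3$, $f \mapsto z^2 f$, kills the nonzero class of $x$, and since $\dim_K (S/I')_1 = 3 = \dim_K (S/I')_3$, this map is neither injective nor surjective. -/

import Mathlib

open MvPolynomial

variable {K : Type*} [Field K] {n : ℕ}

/-- The total degree of an exponent vector. -/
def mdeg {n : ℕ} (m : Fin n →₀ ℕ) : ℕ := m.sum fun _ e => e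

/-- `I` is a monomial ideal: it contains every monomial of each of its elements. -/
def IsMonomialIdeal (I : Ideal (MvPolynomial (Fin n) K)) : Prop :=
  ∀ f ∈ I, ∀ m ∈ f.support, (monomial m (1 : K)) ∈ I

/-- `I` is stable: for every monomial `u ∈ I` with largest dividing variable `x_k`,
and every `i ≤ k`, the monomial `(x_i / x_k) * u` lies in `I`. -/
def IsStableIdeal (I : Ideal (MvPolynomial (Fin n) K)) : Prop :=
  ∀ m : Fin n →₀ ℕ, (monomial m (1 : K)) ∈ I →
    ∀ k i : Fin n, m k ≠ 0 → (∀ k', k < k' → m k' = 0) → i ≤ k →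
      (monomial (m + Finsupp.single i 1 - Finsupp.single k 1) (1 : K)) ∈ I

/-- `I` is strongly stable: for every monomial `u ∈ I`, every variable `x_k` dividing `u`
and every `i ≤ k`, the monomial `(x_i / x_k) * u` lies in `I`. -/
def IsStronglyStableIdeal (I : Ideal (MvPolynomial (Fin n) K)) : Prop :=
  ∀ m : Fin n →₀ ℕ, (monomial m (1 : K)) ∈ I →
    ∀ k i : Fin n, m k ≠ 0 → i ≤ k →
      (monomial (m + Finsupp.single i 1 - Finsupp.single k 1) (1 : K)) ∈ I

/-- `v <_lex u` for exponent vectors, lex order with `x_1 > x_2 > ⋯ > x_n`. -/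
def lexLt {n : ℕ} (v u : Fin n →₀ ℕ) : Prop :=
  ∃ i : Fin n, (∀ j < i, v j = u j) ∧ v i < u i

/-- `I` is a lexsegment ideal. -/
def IsLexsegmentIdeal (I : Ideal (MvPolynomial (Fin n) K)) : Prop :=
  IsMonomialIdeal I ∧
    ∀ u v : Fin n →₀ ℕ, (monomial u (1 : K)) ∈ I → mdeg v = mdeg u → lexLt u v →
      (monomial v (1 : K)) ∈ I

/-- The degree `j` piece of `S/I`, as the image of the degree `j` homogeneous polynomials. -/
noncomputable def Qpiece (I : Ideal (MvPolynomial (Fin n) K)) (j : ℕ) :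
    Submodule K (MvPolynomial (Fin n) K ⧸ I) :=
  (homogeneousSubmodule (Fin n) K j).map (Ideal.Quotient.mkₐ K I).toLinearMap

/-- Multiplication by `g` maps `(S/I)_j` injectively (to `(S/I)_{j'}`). -/
def QInj (I : Ideal (MvPolynomial (Fin n) K)) (g : MvPolynomial (Fin n) K)
    (j _j' : ℕ) : Prop :=
  ∀ f₁ ∈ Qpiece I j, ∀ f₂ ∈ Qpiece I j,
    Ideal.Quotient.mk I g * f₁ = Ideal.Quotient.mk I g * f₂ → f₁ = f₂

/-- Multiplication by `g` maps `(S/I)_j` onto `(S/I)_{j'}`. -/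
def QSurj (I : Ideal (MvPolynomial (Fin n) K)) (g : MvPolynomial (Fin n) K)
    (j j' : ℕ) : Prop :=
  ∀ h ∈ Qpiece I j', ∃ f ∈ Qpiece I j, Ideal.Quotient.mk I g * f = h

/-- Multiplication by `g` from `(S/I)_j` to `(S/I)_{j'}` has maximal rank. -/
def MulMaxRank (I : Ideal (MvPolynomial (Fin n) K)) (g : MvPolynomial (Fin n) K)
    (j j' : ℕ) : Prop :=
  QInj I g j j' ∨ QSurj I g j j'

namespace Stmt11Aux

/-- `P m` iff the monomial with exponent `m` is divisible by one of the generators. -/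
def P (m : Fin 3 →₀ ℕ) : Prop :=
  2 ≤ m 0 ∨ (1 ≤ m 0 ∧ 1 ≤ m 1) ∨ 3 ≤ m 1 ∨ (1 ≤ m 0 ∧ 2 ≤ m 2) ∨
    (2 ≤ m 1 ∧ 2 ≤ m 2) ∨ (1 ≤ m 1 ∧ 3 ≤ m 2) ∨ 4 ≤ m 2

lemma P_add_left (a b : Fin 3 →₀ ℕ) (h : P b) : P (a + b) := by
  simp only [P, Finsupp.add_apply] at h ⊢; omega

variable {K : Type*} [Field K]

/-- The span of all monomials satisfying `P`, as an ideal. -/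
def J (K : Type*) [Field K] : Ideal (MvPolynomial (Fin 3) K) where
  carrier := {f | ∀ m ∈ f.support, P m}
  zero_mem' := by simp
  add_mem' := by
    classical
    intro f g hf hg m hm
    rcases Finset.mem_union.mp (MvPolynomial.support_add hm) with h | h
    exacts [hf m h, hg m h]
  smul_mem' := by
    classical
    intro g f hf m hm
    have := MvPolynomial.support_mul g f (smul_eq_mul g f ▸ hm)
    obtain ⟨a, _, b, hb, rfl⟩ := Finset.mem_add.mp this
    exact P_add_left a b (hf b hb)

/-- divisibility gives ideal membership -/
lemma mem_of_le {I : Ideal (MvPolynomial (Fin 3) K)} {e m : Fin 3 →₀ ℕ}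
    (he : monomial e (1 : K) ∈ I) (h : e ≤ m) : monomial m (1 : K) ∈ I := by
  have : monomial m (1 : K) = monomial (m - e) 1 * monomial e 1 := by
    rw [monomial_mul, one_mul, tsub_add_cancel_of_le h]
  rw [this]
  exact Ideal.mul_mem_left _ _ he

lemma le_of_vals {e m : Fin 3 →₀ ℕ} (h0 : e 0 ≤ m 0) (h1 : e 1 ≤ m 1) (h2 : e 2 ≤ m 2) :
    e ≤ m := by
  rw [Finsupp.le_def]
  intro i; fin_cases i <;> assumption

def Igens (K : Type*) [Field K] : Set (MvPolynomial (Fin 3) K) :=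
  {(X 0 : MvPolynomial (Fin 3) K) ^ 2, X 0 * X 1, X 1 ^ 3,
    X 0 * X 2 ^ 2, X 1 ^ 2 * X 2 ^ 2, X 1 * X 2 ^ 3, X 2 ^ 4}

lemma g1 : (X 0 : MvPolynomial (Fin 3) K) ^ 2 = monomial (Finsupp.single 0 2) 1 :=
  X_pow_eq_monomial
lemma g2 : (X 0 : MvPolynomial (Fin 3) K) * X 1
    = monomial (Finsupp.single 0 1 + Finsupp.single 1 1) 1 := by
  rw [X, X, monomial_mul, one_mul]
lemma g3 : (X 1 : MvPolynomial (Fin 3) K) ^ 3 = monomial (Finsupp.single 1 3) 1 :=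
  X_pow_eq_monomial
lemma g4 : (X 0 : MvPolynomial (Fin 3) K) * X 2 ^ 2
    = monomial (Finsupp.single 0 1 + Finsupp.single 2 2) 1 := by
  rw [X, X_pow_eq_monomial, monomial_mul, one_mul]
lemma g5 : (X 1 : MvPolynomial (Fin 3) K) ^ 2 * X 2 ^ 2
    = monomial (Finsupp.single 1 2 + Finsupp.single 2 2) 1 := by
  rw [X_pow_eq_monomial, X_pow_eq_monomial, monomial_mul, one_mul]
lemma g6 : (X 1 : MvPolynomial (Fin 3) K) * X 2 ^ 3
    = monomial (Finsupp.single 1 1 + Finsupp.single 2 3) 1 := by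
  rw [X, X_pow_eq_monomial, monomial_mul, one_mul]
lemma g7 : (X 2 : MvPolynomial (Fin 3) K) ^ 4 = monomial (Finsupp.single 2 4) 1 :=
  X_pow_eq_monomial

lemma mem_I_of_P {m : Fin 3 →₀ ℕ} (hP : P m) :
    monomial m (1 : K) ∈ Ideal.span (Igens K) := by
  have h1 : ∀ f ∈ Igens K, f ∈ Ideal.span (Igens K) := fun f hf => Ideal.subset_span hf
  have m1 : monomial (Finsupp.single 0 2) (1:K) ∈ Ideal.span (Igens K) := by
    rw [← g1]; exact h1 _ (by simp [Igens])
  have m2 : monomial (Finsupp.single 0 1 + Finsupp.single 1 1) (1:K) ∈ Ideal.span (Igens K) := by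
    rw [← g2]; exact h1 _ (by simp [Igens])
  have m3 : monomial (Finsupp.single 1 3) (1:K) ∈ Ideal.span (Igens K) := by
    rw [← g3]; exact h1 _ (by simp [Igens])
  have m4 : monomial (Finsupp.single 0 1 + Finsupp.single 2 2) (1:K) ∈ Ideal.span (Igens K) := by
    rw [← g4]; exact h1 _ (by simp [Igens])
  have m5 : monomial (Finsupp.single 1 2 + Finsupp.single 2 2) (1:K) ∈ Ideal.span (Igens K) := by
    rw [← g5]; exact h1 _ (by simp [Igens])
  have m6 : monomial (Finsupp.single 1 1 + Finsupp.single 2 3) (1:K) ∈ Ideal.span (Igens K) := by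
    rw [← g6]; exact h1 _ (by simp [Igens])
  have m7 : monomial (Finsupp.single 2 4) (1:K) ∈ Ideal.span (Igens K) := by
    rw [← g7]; exact h1 _ (by simp [Igens])
  rcases hP with h | h | h | h | h | h | h
  · refine mem_of_le m1 (le_of_vals ?_ ?_ ?_) <;>
      simp only [Finsupp.add_apply, Finsupp.single_apply] <;> simp <;> omega
  · refine mem_of_le m2 (le_of_vals ?_ ?_ ?_) <;>
      simp only [Finsupp.add_apply, Finsupp.single_apply] <;> simp <;> omega
  · refine mem_of_le m3 (le_of_vals ?_ ?_ ?_) <;>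
      simp only [Finsupp.add_apply, Finsupp.single_apply] <;> simp <;> omega
  · refine mem_of_le m4 (le_of_vals ?_ ?_ ?_) <;>
      simp only [Finsupp.add_apply, Finsupp.single_apply] <;> simp <;> omega
  · refine mem_of_le m5 (le_of_vals ?_ ?_ ?_) <;>
      simp only [Finsupp.add_apply, Finsupp.single_apply] <;> simp <;> omega
  · refine mem_of_le m6 (le_of_vals ?_ ?_ ?_) <;>
      simp only [Finsupp.add_apply, Finsupp.single_apply] <;> simp <;> omega
  · refine mem_of_le m7 (le_of_vals ?_ ?_ ?_) <;>
      simp only [Finsupp.add_apply, Finsupp.single_apply] <;> simp <;> omega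

lemma span_le_J : Ideal.span (Igens K) ≤ J K := by
  classical
  rw [Ideal.span_le]
  have key : ∀ (e : Fin 3 →₀ ℕ), P e → monomial e (1:K) ∈ (J K : Set _) := by
    intro e hPe m hm
    rw [support_monomial, if_neg one_ne_zero, Finset.mem_singleton] at hm
    rwa [hm]
  intro f hf
  rcases hf with h | h | h | h | h | h | h <;> rw [h]
  · rw [g1]; exact key _ (by simp [P, Finsupp.single_apply])
  · rw [g2]; exact key _ (by simp [P, Finsupp.single_apply])
  · rw [g3]; exact key _ (by simp [P, Finsupp.single_apply])
  · rw [g4]; exact key _ (by simp [P, Finsupp.single_apply])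
  · rw [g5]; exact key _ (by simp [P, Finsupp.single_apply])
  · rw [g6]; exact key _ (by simp [P, Finsupp.single_apply])
  · rw [g7]; exact key _ (by simp [P, Finsupp.single_apply])

lemma coeff_zero_of_mem {f : MvPolynomial (Fin 3) K} (hf : f ∈ Ideal.span (Igens K))
    {m : Fin 3 →₀ ℕ} (hm : ¬ P m) : coeff m f = 0 := by
  by_contra hc
  exact hm (span_le_J hf m (mem_support_iff.mpr hc))

lemma eq_of_vals {m : Fin 3 →₀ ℕ} {a b c : ℕ} (h0 : m 0 = a) (h1 : m 1 = b) (h2 : m 2 = c) :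
    m = Finsupp.single 0 a + Finsupp.single 1 b + Finsupp.single 2 c := by
  ext i
  fin_cases i <;> simp [Finsupp.single_apply, h0, h1, h2]

lemma degree_eq (m : Fin 3 →₀ ℕ) : m.degree = m 0 + m 1 + m 2 := by
  rw [Finsupp.degree_apply, Finset.sum_subset (Finset.subset_univ _)
    (fun i _ hi => Finsupp.notMem_support_iff.mp hi), Fin.sum_univ_three]

lemma deg1_cases (m : Fin 3 →₀ ℕ) (h : m 0 + m 1 + m 2 = 1) :
    m = Finsupp.single 0 1 ∨ m = Finsupp.single 1 1 ∨ m = Finsupp.single 2 1 := by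
  have h3 : (m 0 = 1 ∧ m 1 = 0 ∧ m 2 = 0) ∨ (m 0 = 0 ∧ m 1 = 1 ∧ m 2 = 0) ∨
      (m 0 = 0 ∧ m 1 = 0 ∧ m 2 = 1) := by omega
  rcases h3 with ⟨h0, h1, h2⟩ | ⟨h0, h1, h2⟩ | ⟨h0, h1, h2⟩
  · exact Or.inl (by simpa using eq_of_vals h0 h1 h2)
  · exact Or.inr (Or.inl (by simpa using eq_of_vals h0 h1 h2))
  · exact Or.inr (Or.inr (by simpa using eq_of_vals h0 h1 h2))

lemma deg3_cases (m : Fin 3 →₀ ℕ) (h : m 0 + m 1 + m 2 = 3) (hP : ¬ P m) :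
    m = Finsupp.single 1 2 + Finsupp.single 2 1 ∨
    m = Finsupp.single 1 1 + Finsupp.single 2 2 ∨
    m = Finsupp.single 2 3 := by
  simp only [P, not_or, not_and, not_le] at hP
  have h3 : (m 0 = 0 ∧ m 1 = 2 ∧ m 2 = 1) ∨ (m 0 = 0 ∧ m 1 = 1 ∧ m 2 = 2) ∨
      (m 0 = 0 ∧ m 1 = 0 ∧ m 2 = 3) := by omega
  rcases h3 with ⟨h0, h1, h2⟩ | ⟨h0, h1, h2⟩ | ⟨h0, h1, h2⟩
  · exact Or.inl (by simpa using eq_of_vals h0 h1 h2)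
  · exact Or.inr (Or.inl (by simpa using eq_of_vals h0 h1 h2))
  · exact Or.inr (Or.inr (by simpa using eq_of_vals h0 h1 h2))

lemma support_deg {p : MvPolynomial (Fin 3) K} {d : ℕ}
    (hp : p.IsHomogeneous d) {m : Fin 3 →₀ ℕ} (hm : m ∈ p.support) :
    m 0 + m 1 + m 2 = d := by
  rw [← degree_eq, Finsupp.degree_eq_weight_one]
  exact hp (mem_support_iff.mp hm)

lemma lin_indep_aux (I : Ideal (MvPolynomial (Fin 3) K))
    (hIJ : Ideal.span (Igens K) = I)
    (es : Fin 3 → (Fin 3 →₀ ℕ)) (hdist : Function.Injective es)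
    (hnP : ∀ i, ¬ P (es i)) :
    LinearIndependent K (fun i => Ideal.Quotient.mk I (monomial (es i) (1:K))) := by
  classical
  rw [Fintype.linearIndependent_iff]
  intro g hg
  have hmk : Ideal.Quotient.mk I (∑ i, g i • monomial (es i) (1:K)) = 0 := by
    rw [← Ideal.Quotient.mkₐ_eq_mk (R₁ := K), map_sum]
    simp only [map_smul, Ideal.Quotient.mkₐ_eq_mk]
    exact hg
  have hmem : (∑ i, g i • monomial (es i) (1:K)) ∈ Ideal.span (Igens K) := by
    rw [hIJ]
    exact Ideal.Quotient.eq_zero_iff_mem.mp hmk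
  intro i
  have hc : coeff (es i) (∑ j, g j • monomial (es j) (1:K)) = g i := by
    rw [coeff_sum]
    simp only [coeff_smul, coeff_monomial, smul_eq_mul, mul_ite, mul_one, mul_zero,
      hdist.eq_iff]
    simp
  rw [← hc]
  exact coeff_zero_of_mem hmem (hnP i)

end Stmt11Aux

open Stmt11Aux in
set_option maxHeartbeats 1000000 in
theorem stmt_11 (I' : Ideal (MvPolynomial (Fin 3) K))
    (hI : I' = Ideal.span {(X 0 : MvPolynomial (Fin 3) K) ^ 2, X 0 * X 1, X 1 ^ 3,
        X 0 * X 2 ^ 2, X 1 ^ 2 * X 2 ^ 2, X 1 * X 2 ^ 3, X 2 ^ 4}) :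
    Ideal.Quotient.mk I' (X 0) ≠ 0 ∧
    Ideal.Quotient.mk I' (X 2) ^ 2 * Ideal.Quotient.mk I' (X 0) = 0 ∧
    Module.finrank K (Qpiece I' 1) = 3 ∧
    Module.finrank K (Qpiece I' 3) = 3 ∧
    ¬ QInj I' ((X 2 : MvPolynomial (Fin 3) K) ^ 2) 1 3 ∧
    ¬ QSurj I' ((X 2 : MvPolynomial (Fin 3) K) ^ 2) 1 3 := by
  classical
  have hI' : I' = Ideal.span (Igens K) := hI
  -- part 1 : mk (X 0) ≠ 0
  have part1 : Ideal.Quotient.mk I' (X 0) ≠ 0 := by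
    rw [Ne, Ideal.Quotient.eq_zero_iff_mem, hI']
    intro hmem
    have hc : coeff (Finsupp.single 0 1) (X 0 : MvPolynomial (Fin 3) K) = 1 := by
      rw [X, coeff_monomial, if_pos rfl]
    have := coeff_zero_of_mem hmem (m := Finsupp.single 0 1)
      (by simp [P, Finsupp.single_apply])
    rw [hc] at this
    exact one_ne_zero this
  -- part 2
  have hxz2 : (X 0 : MvPolynomial (Fin 3) K) * X 2 ^ 2 ∈ I' := by
    rw [hI']
    exact Ideal.subset_span (by simp [Igens])
  have part2 : Ideal.Quotient.mk I' (X 2) ^ 2 * Ideal.Quotient.mk I' (X 0) = 0 := by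
    rw [← map_pow, ← map_mul, Ideal.Quotient.eq_zero_iff_mem]
    have : (X 2 : MvPolynomial (Fin 3) K) ^ 2 * X 0 = X 0 * X 2 ^ 2 := by ring
    rw [this]
    exact hxz2
  -- spanning families
  set v : Fin 3 → (MvPolynomial (Fin 3) K ⧸ I') :=
    fun i => Ideal.Quotient.mk I' (monomial (Finsupp.single i 1) (1:K)) with hv
  set es3 : Fin 3 → (Fin 3 →₀ ℕ) :=
    ![Finsupp.single 1 2 + Finsupp.single 2 1, Finsupp.single 1 1 + Finsupp.single 2 2,
      Finsupp.single 2 3] with hes3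
  set w : Fin 3 → (MvPolynomial (Fin 3) K ⧸ I') :=
    fun i => Ideal.Quotient.mk I' (monomial (es3 i) (1:K)) with hw
  have hes3val : ∀ i : Fin 3, (es3 i) 1 = 2 - (i : ℕ) := by
    intro i; fin_cases i <;> simp [hes3, Finsupp.single_apply]
  have hes3inj : Function.Injective es3 := by
    intro a b hab
    have h1 := DFunLike.congr_fun hab 1
    rw [hes3val a, hes3val b] at h1
    have ha := a.isLt
    have hb := b.isLt
    exact Fin.ext (by omega)
  have hes3nP : ∀ i : Fin 3, ¬ P (es3 i) := by
    intro i; fin_cases i <;> simp [hes3, P, Finsupp.single_apply]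
  have hes3deg : ∀ i : Fin 3, (es3 i) 0 + (es3 i) 1 + (es3 i) 2 = 3 := by
    intro i; fin_cases i <;> simp [hes3, Finsupp.single_apply]
  -- span facts
  have hmono_mem : ∀ (m : Fin 3 →₀ ℕ) (d : ℕ), m 0 + m 1 + m 2 = d →
      Ideal.Quotient.mk I' (monomial m (1:K)) ∈ Qpiece I' d := by
    intro m d hd
    refine ⟨monomial m 1, ?_, by simp [Ideal.Quotient.mkₐ_eq_mk]⟩
    rw [SetLike.mem_coe, mem_homogeneousSubmodule]
    exact isHomogeneous_monomial _ (by rw [degree_eq]; exact hd)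
  have hQle : ∀ (d : ℕ) (u : Fin 3 → (MvPolynomial (Fin 3) K ⧸ I')),
      (∀ m : Fin 3 →₀ ℕ, m 0 + m 1 + m 2 = d →
        Ideal.Quotient.mk I' (monomial m (1:K)) ∈ Submodule.span K (Set.range u)) →
      Qpiece I' d ≤ Submodule.span K (Set.range u) := by
    intro d u hu q hq
    obtain ⟨p, hp, rfl⟩ := hq
    have hph : p.IsHomogeneous d := hp
    have hrw : (Ideal.Quotient.mkₐ K I').toLinearMap p
        = ∑ m ∈ p.support, coeff m p • Ideal.Quotient.mk I' (monomial m (1:K)) := by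
      conv_lhs => rw [show p = ∑ m ∈ p.support, monomial m (coeff m p) from p.as_sum]
      rw [map_sum]
      refine Finset.sum_congr rfl fun m _ => ?_
      rw [AlgHom.toLinearMap_apply, Ideal.Quotient.mkₐ_eq_mk,
        show monomial m (coeff m p) = coeff m p • monomial m (1:K) by
          rw [smul_monomial, smul_eq_mul, mul_one]]
      rw [← Ideal.Quotient.mkₐ_eq_mk (R₁ := K), map_smul, Ideal.Quotient.mkₐ_eq_mk]
    rw [hrw]
    refine Submodule.sum_mem _ fun m hm => Submodule.smul_mem _ _ ?_
    exact hu m (support_deg hph hm)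
  have hspan1 : Qpiece I' 1 = Submodule.span K (Set.range v) := by
    apply le_antisymm
    · refine hQle 1 v fun m hm => ?_
      rcases deg1_cases m hm with rfl | rfl | rfl
      · exact Submodule.subset_span ⟨0, rfl⟩
      · exact Submodule.subset_span ⟨1, rfl⟩
      · exact Submodule.subset_span ⟨2, rfl⟩
    · rw [Submodule.span_le]
      rintro _ ⟨i, rfl⟩
      exact hmono_mem _ 1 (by fin_cases i <;> simp [Finsupp.single_apply])
  have hspan3 : Qpiece I' 3 = Submodule.span K (Set.range w) := by
    apply le_antisymm
    · refine hQle 3 w fun m hm => ?_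
      by_cases hPm : P m
      · have : Ideal.Quotient.mk I' (monomial m (1:K)) = 0 := by
          rw [Ideal.Quotient.eq_zero_iff_mem, hI']
          exact mem_I_of_P hPm
        rw [this]
        exact Submodule.zero_mem _
      · rcases deg3_cases m hm hPm with rfl | rfl | rfl
        · exact Submodule.subset_span ⟨0, rfl⟩
        · exact Submodule.subset_span ⟨1, rfl⟩
        · exact Submodule.subset_span ⟨2, rfl⟩
    · rw [Submodule.span_le]
      rintro _ ⟨i, rfl⟩
      exact hmono_mem _ 3 (hes3deg i)
  -- linear independence
  have hli1 : LinearIndependent K v :=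
    lin_indep_aux I' hI'.symm _ (Finsupp.single_left_injective one_ne_zero)
      (fun i => by fin_cases i <;> simp [P, Finsupp.single_apply])
  have hli3 : LinearIndependent K w := lin_indep_aux I' hI'.symm _ hes3inj hes3nP
  have part3 : Module.finrank K (Qpiece I' 1) = 3 := by
    rw [hspan1, finrank_span_eq_card hli1]
    simp
  have part4 : Module.finrank K (Qpiece I' 3) = 3 := by
    rw [hspan3, finrank_span_eq_card hli3]
    simp
  -- not injective
  have hX0mem : Ideal.Quotient.mk I' (X 0) ∈ Qpiece I' 1 := by
    refine ⟨X 0, ?_, by simp [Ideal.Quotient.mkₐ_eq_mk]⟩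
    rw [SetLike.mem_coe, mem_homogeneousSubmodule]
    exact isHomogeneous_X _ _
  have part5 : ¬ QInj I' ((X 2 : MvPolynomial (Fin 3) K) ^ 2) 1 3 := by
    intro hinj
    have h0 : (0 : MvPolynomial (Fin 3) K ⧸ I') ∈ Qpiece I' 1 :=
      Submodule.zero_mem _
    have heq : Ideal.Quotient.mk I' ((X 2 : MvPolynomial (Fin 3) K) ^ 2)
        * Ideal.Quotient.mk I' (X 0)
        = Ideal.Quotient.mk I' ((X 2 : MvPolynomial (Fin 3) K) ^ 2) * 0 := by
      rw [mul_zero, map_pow]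
      exact part2
    exact part1 (hinj _ hX0mem 0 h0 heq)
  -- not surjective
  have part6 : ¬ QSurj I' ((X 2 : MvPolynomial (Fin 3) K) ^ 2) 1 3 := by
    intro hsurj
    obtain ⟨f, hf, heq⟩ := hsurj (w 0) (by rw [hspan3]; exact Submodule.subset_span ⟨0, rfl⟩)
    obtain ⟨p, _, rfl⟩ := hf
    rw [AlgHom.toLinearMap_apply, Ideal.Quotient.mkₐ_eq_mk] at heq
    simp only [hw] at heq
    have hmem : (X 2 : MvPolynomial (Fin 3) K) ^ 2 * p - monomial (es3 0) 1 ∈ I' := by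
      rw [← Ideal.Quotient.eq_zero_iff_mem, map_sub, map_mul, map_pow, sub_eq_zero]
      exact heq
    rw [hI'] at hmem
    have hcz : coeff (es3 0) ((X 2 : MvPolynomial (Fin 3) K) ^ 2 * p) = 0 := by
      rw [mul_comm, X_pow_eq_monomial, coeff_mul_monomial', if_neg]
      intro hle
      have := hle 2
      simp [hes3, Finsupp.single_apply] at this
    have hco := coeff_zero_of_mem hmem (m := es3 0) (hes3nP 0)
    rw [coeff_sub, hcz, coeff_monomial, if_pos rfl, zero_sub] at hco
    exact one_ne_zero (neg_eq_zero.mp hco)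
  exact ⟨part1, part2, part3, part4, part5, part6⟩
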